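/- Let G be a commutative (abelian) topological group. If μ, ν ∈ Meas(rG) are uniform measures, then μ ⋆ ν = ν ⋆ μ, i.e., (μ ⋆ ν)(f) = (ν ⋆ μ)(f) for every f ∈ Ub(rG). -/

import Mathlib

noncomputable section

open Filter Topology

/-- `f` is a bounded uniformly continuous real-valued function,
i.e. a member of `Ub(X)`. -/
def IsUb {X : Type*} [UniformSpace X] (f : X → ℝ) : Prop :=
  UniformContinuous f ∧ ∃ C : ℝ, ∀ x, |f x| ≤ C

/-- Supremum norm of a real-valued function. -/
def supNorm {α : Type*} (f : α → ℝ) : ℝ :=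
  sSup (Set.range fun x => |f x|)

/-- `μ` is (the restriction to `Ub(X)` of) a norm-continuous linear functional on `Ub(X)`,
i.e. a member of `Meas(X)`.  It is represented as a bare map on all functions;
only its values on `Ub(X)` are relevant. -/
def IsMeas {X : Type*} [UniformSpace X] (μ : (X → ℝ) → ℝ) : Prop :=
  (∀ f g : X → ℝ, IsUb f → IsUb g → μ (f + g) = μ f + μ g) ∧
  (∀ (c : ℝ) (f : X → ℝ), IsUb f → μ (c • f) = c * μ f) ∧
  (∃ C : ℝ, ∀ f : X → ℝ, IsUb f → (∀ x, |f x| ≤ 1) → |μ f| ≤ C)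

/-- The dual norm on `Meas(X)`:  `‖μ‖ = sup {|μ f| : f ∈ Ub(X), ‖f‖ ≤ 1}`. -/
def measNorm {X : Type*} [UniformSpace X] (μ : (X → ℝ) → ℝ) : ℝ :=
  sSup {r : ℝ | ∃ f : X → ℝ, IsUb f ∧ (∀ x, |f x| ≤ 1) ∧ r = |μ f|}

/-- `μ` is a positive functional:  `μ f ≥ 0` whenever `f ∈ Ub(X)` and `f ≥ 0`. -/
def IsPositive {X : Type*} [UniformSpace X] (μ : (X → ℝ) → ℝ) : Prop :=
  ∀ f : X → ℝ, IsUb f → (∀ x, 0 ≤ f x) → 0 ≤ μ f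

/-- `μ` is a *uniform measure*: on every norm-bounded uniformly equicontinuous set
`H ⊆ Ub(X)`, `μ` is continuous for the topology of pointwise convergence. -/
def IsUniformMeasure {X : Type*} [UniformSpace X] (μ : (X → ℝ) → ℝ) : Prop :=
  ∀ H : Set (X → ℝ),
    (∃ C : ℝ, ∀ f ∈ H, ∀ x, |f x| ≤ C) →
    H.UniformEquicontinuous →
    ∀ f₀ ∈ H, ∀ ε : ℝ, 0 < ε →
      ∃ (K : Finset X) (δ : ℝ), 0 < δ ∧
        ∀ f ∈ H, (∀ x ∈ K, |f x - f₀ x| < δ) → |μ f - μ f₀| < ε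

/-- A *semiuniform* function on `X × Y`, i.e. a member of `Ub(X ⋉ Y)` where `X ⋉ Y` is the
semiuniform product: `f` is bounded, the family of sections `x ↦ f (x, y)` (for `y ∈ Y`)
is uniformly equicontinuous on `X`, and every section `y ↦ f (x, y)` is uniformly
continuous on `Y`. -/
def Semiuniform {X Y : Type*} [UniformSpace X] [UniformSpace Y] (f : X × Y → ℝ) : Prop :=
  (∃ C : ℝ, ∀ p, |f p| ≤ C) ∧
  UniformEquicontinuous (fun y : Y => fun x : X => f (x, y)) ∧
  ∀ x : X, UniformContinuous fun y : Y => f (x, y)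

/-- The direct product `μ ⊗ ν`, evaluated at `f : X × Y → ℝ`:
`(μ ⊗ ν)(f) = μ (x ↦ ν (y ↦ f (x, y)))`. -/
def dirProd {X Y : Type*} (μ : (X → ℝ) → ℝ) (ν : (Y → ℝ) → ℝ) (f : X × Y → ℝ) : ℝ :=
  μ fun x => ν fun y => f (x, y)

/-- Convolution: `(μ ⋆ ν)(f) = μ (x ↦ ν (y ↦ f (x · y)))`. -/
def conv {G : Type*} [Mul G] (μ ν : (G → ℝ) → ℝ) : (G → ℝ) → ℝ :=
  fun f => μ fun x => ν fun y => f (x * y)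

/-- The weak-* topology on `Meas(X)`: the topology of pointwise convergence on `Ub(X)`. -/
def weakStarMeas (X : Type*) [UniformSpace X] :
    TopologicalSpace {ν : (X → ℝ) → ℝ // IsMeas ν} :=
  TopologicalSpace.induced
    (fun ν => fun f : {f : X → ℝ // IsUb f} => ν.1 f.1) Pi.topologicalSpace

open Uniformity

section helpers
variable {X : Type*} [UniformSpace X]

lemma isUb_zero : IsUb (fun _ : X => (0:ℝ)) := ⟨uniformContinuous_const, 0, by simp⟩

lemma IsUb.add' {f g : X → ℝ} (hf : IsUb f) (hg : IsUb g) : IsUb (fun x => f x + g x) := by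
  obtain ⟨Cf, hCf⟩ := hf.2; obtain ⟨Cg, hCg⟩ := hg.2
  exact ⟨hf.1.add hg.1, Cf + Cg, fun x => (abs_add_le _ _).trans (add_le_add (hCf x) (hCg x))⟩

lemma IsUb.sub' {f g : X → ℝ} (hf : IsUb f) (hg : IsUb g) : IsUb (fun x => f x - g x) := by
  obtain ⟨Cf, hCf⟩ := hf.2; obtain ⟨Cg, hCg⟩ := hg.2
  exact ⟨hf.1.sub hg.1, Cf + Cg, fun x => (abs_sub _ _).trans (add_le_add (hCf x) (hCg x))⟩

lemma IsUb.constMul {f : X → ℝ} (c : ℝ) (hf : IsUb f) : IsUb (fun x => c * f x) := by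
  obtain ⟨Cf, hCf⟩ := hf.2
  have huc : UniformContinuous (fun x => c * f x) := by
    have := hf.1.const_smul c
    simpa [Pi.smul_def, smul_eq_mul] using this
  refine ⟨huc, |c| * Cf, fun x => ?_⟩
  rw [abs_mul]
  exact mul_le_mul_of_nonneg_left (hCf x) (abs_nonneg c)

lemma isUb_sum {ι : Type*} (s : Finset ι) (c : ι → ℝ) (g : ι → X → ℝ)
    (h : ∀ i ∈ s, IsUb (g i)) : IsUb (fun x => ∑ i ∈ s, c i * g i x) := by
  classical
  induction s using Finset.induction_on with
  | empty => simpa using isUb_zero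
  | @insert a s hnot ih =>
    have : (fun x => ∑ i ∈ insert a s, c i * g i x)
        = fun x => c a * g a x + ∑ i ∈ s, c i * g i x := by
      funext x; rw [Finset.sum_insert hnot]
    rw [this]
    exact ((h a (Finset.mem_insert_self a s)).constMul (c a)).add'
      (ih fun i hi => h i (Finset.mem_insert_of_mem hi))

variable {μ : (X → ℝ) → ℝ}

lemma IsMeas.addf (hμ : IsMeas μ) {f g : X → ℝ} (hf : IsUb f) (hg : IsUb g) :
    μ (fun x => f x + g x) = μ f + μ g := hμ.1 f g hf hg

lemma IsMeas.smulf (hμ : IsMeas μ) {f : X → ℝ} (c : ℝ) (hf : IsUb f) :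
    μ (fun x => c * f x) = c * μ f := hμ.2.1 c f hf

lemma IsMeas.zerof (hμ : IsMeas μ) : μ (fun _ => 0) = 0 := by
  have h := hμ.smulf (f := fun _ => 0) 0 isUb_zero
  simpa using h

lemma IsMeas.subf (hμ : IsMeas μ) {f g : X → ℝ} (hf : IsUb f) (hg : IsUb g) :
    μ (fun x => f x - g x) = μ f - μ g := by
  have h := hμ.addf (hf.sub' hg) hg
  have h2 : (fun x => (f x - g x) + g x) = f := by funext x; ring
  rw [h2] at h; linarith

lemma IsMeas.sumf (hμ : IsMeas μ) {ι : Type*} (s : Finset ι) (c : ι → ℝ) (g : ι → X → ℝ)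
    (h : ∀ i ∈ s, IsUb (g i)) :
    μ (fun x => ∑ i ∈ s, c i * g i x) = ∑ i ∈ s, c i * μ (g i) := by
  classical
  induction s using Finset.induction_on with
  | empty => simpa using hμ.zerof
  | @insert a s hnot ih =>
    have h1 : (fun x => ∑ i ∈ insert a s, c i * g i x)
        = fun x => (c a * g a x) + ∑ i ∈ s, c i * g i x := by
      funext x; rw [Finset.sum_insert hnot]
    rw [h1, hμ.addf ((h a (Finset.mem_insert_self a s)).constMul (c a))
        (isUb_sum s c g fun i hi => h i (Finset.mem_insert_of_mem hi)),
      hμ.smulf (c a) (h a (Finset.mem_insert_self a s)),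
      ih (fun i hi => h i (Finset.mem_insert_of_mem hi)), Finset.sum_insert hnot]

lemma IsMeas.bound (hμ : IsMeas μ) :
    ∃ C : ℝ, 1 ≤ C ∧ ∀ g t, IsUb g → 0 ≤ t → (∀ x, |g x| ≤ t) → |μ g| ≤ C * t := by
  obtain ⟨C₀, hC₀⟩ := hμ.2.2
  refine ⟨max C₀ 1, le_max_right _ _, fun g t hg ht hgt => ?_⟩
  rcases eq_or_lt_of_le ht with h0 | h0
  · have hg0 : g = fun _ => 0 := by
      funext x
      have := hgt x; rw [← h0] at this
      have := abs_nonneg (g x)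
      have : |g x| = 0 := le_antisymm (by linarith) (abs_nonneg _)
      exact abs_eq_zero.mp this
    rw [hg0, hμ.zerof, ← h0]; simp
  · set g' : X → ℝ := fun x => t⁻¹ * g x with hg'def
    have hg' : IsUb g' := hg.constMul t⁻¹
    have hb : ∀ x, |g' x| ≤ 1 := by
      intro x
      rw [hg'def, abs_mul, abs_of_nonneg (inv_nonneg.mpr ht)]
      rw [inv_mul_le_iff₀ h0, mul_one]
      exact hgt x
    have h1 : μ g = t * μ g' := by
      have : (fun x => t * g' x) = g := by
        funext x; rw [hg'def]; field_simp
      rw [← this, hμ.smulf t hg']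
    rw [h1, abs_mul, abs_of_pos h0]
    calc t * |μ g'| ≤ t * C₀ := mul_le_mul_of_nonneg_left (hC₀ g' hg' hb) ht
      _ ≤ max C₀ 1 * t := by
          rw [mul_comm]
          exact mul_le_mul_of_nonneg_right (le_max_left _ _) ht

/-- uniform continuity from an ε-characterization -/
lemma uc_of_abs {g : X → ℝ}
    (h : ∀ ε : ℝ, 0 < ε → ∃ U ∈ 𝓤 X, ∀ p ∈ U, |g (Prod.fst p) - g p.2| < ε) :
    UniformContinuous g := by
  rw [UniformContinuous]
  intro V hV
  obtain ⟨ε, hε, hd⟩ := Metric.mem_uniformity_dist.mp hV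
  obtain ⟨U, hU, hUP⟩ := h ε hε
  rw [Filter.mem_map]
  exact Filter.mem_of_superset hU fun p hp => hd (by rw [Real.dist_eq]; exact hUP p hp)

end helpers

section helly
open Finset

lemma helly_approx {X : Type*} [UniformSpace X] [Nonempty X] {ι : Type*} [Fintype ι]
    {ν : (X → ℝ) → ℝ} (hν : IsMeas ν) (g : ι → X → ℝ) (hg : ∀ i, IsUb (g i))
    {C : ℝ} (hC1 : 1 ≤ C)
    (hCb : ∀ h t, IsUb h → 0 ≤ t → (∀ x, |h x| ≤ t) → |ν h| ≤ C * t)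
    {δ : ℝ} (hδ : 0 < δ) :
    ∃ (n : ℕ) (c : Fin n → ℝ) (y : Fin n → X),
      (∑ j, |c j| ≤ C) ∧ ∀ i, |(∑ j, c j * g i (y j)) - ν (g i)| < δ := by
  classical
  have hC0 : (0:ℝ) < C := lt_of_lt_of_le zero_lt_one hC1
  set E := ι → ℝ
  set Φ : X → E := fun y i => g i y with hΦ
  set v : E := fun i => ν (g i) with hv
  set T : Set E := {w | ∃ (n : ℕ) (c : Fin n → ℝ) (y : Fin n → X),
    (∑ j, |c j| ≤ C) ∧ w = ∑ j, c j • Φ (y j)} with hT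
  -- T is convex
  have hTconv : Convex ℝ T := by
    rintro w₁ ⟨n₁, c₁, y₁, hs₁, rfl⟩ w₂ ⟨n₂, c₂, y₂, hs₂, rfl⟩ a b ha hb hab
    refine ⟨n₁ + n₂, Fin.append (fun j => a * c₁ j) (fun j => b * c₂ j),
      Fin.append y₁ y₂, ?_, ?_⟩
    · rw [Fin.sum_univ_add]
      simp only [Fin.append_left, Fin.append_right, abs_mul, abs_of_nonneg ha,
        abs_of_nonneg hb]
      rw [← Finset.mul_sum, ← Finset.mul_sum]
      have h1 : a * ∑ j, |c₁ j| ≤ a * C := mul_le_mul_of_nonneg_left hs₁ ha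
      have h2 : b * ∑ j, |c₂ j| ≤ b * C := mul_le_mul_of_nonneg_left hs₂ hb
      nlinarith
    · rw [Fin.sum_univ_add]
      simp only [Fin.append_left, Fin.append_right]
      rw [Finset.smul_sum, Finset.smul_sum]
      congr 1 <;> · apply Finset.sum_congr rfl; intro j _; rw [smul_smul]
  have h0T : (0 : E) ∈ T := by
    refine ⟨0, Fin.elim0, Fin.elim0, by simpa using hC0.le, by simp⟩
  have hsT : ∀ s : ℝ, |s| ≤ C → ∀ y : X, s • Φ y ∈ T := by
    intro s hs y
    exact ⟨1, fun _ => s, fun _ => y, by simpa using hs, by simp⟩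
  -- v is in the closure of T
  have hvcl : v ∈ closure T := by
    by_contra hvT
    obtain ⟨φ, u, hau, huv⟩ := geometric_hahn_banach_closed_point
      (hTconv.closure) isClosed_closure hvT
    have hu0 : 0 < u := by
      have := hau 0 (subset_closure h0T)
      simpa using this
    set a : ι → ℝ := fun i => φ (fun j => if i = j then (1:ℝ) else 0) with ha
    have hφeq : ∀ w : E, φ w = ∑ i, w i * a i := by
      intro w
      conv_lhs => rw [pi_eq_sum_univ w]
      rw [map_sum]
      refine Finset.sum_congr rfl fun i _ => ?_
      rw [map_smul, smul_eq_mul]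
    set h : X → ℝ := fun y => φ (Φ y) with hhdef
    have hhy : ∀ y, h y = ∑ i, a i * g i y := by
      intro y
      show φ (Φ y) = _
      rw [hφeq (Φ y)]
      exact Finset.sum_congr rfl fun i _ => mul_comm _ _
    have hhub : IsUb h := by
      have : h = fun y => ∑ i ∈ Finset.univ, a i * g i y := by
        funext y; exact hhy y
      rw [this]
      exact isUb_sum _ _ _ fun i _ => hg i
    have hhb : ∀ y, |h y| ≤ u / C := by
      intro y
      have h1 : C * h y < u := by
        have := hau (C • Φ y) (subset_closure (hsT C (by rw [abs_of_pos hC0]) y))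
        rwa [map_smul, smul_eq_mul] at this
      have h2 : -(C * h y) < u := by
        have := hau ((-C) • Φ y) (subset_closure (hsT (-C) (by rw [abs_neg, abs_of_pos hC0]) y))
        rw [map_smul, smul_eq_mul] at this
        linarith
      rw [le_div_iff₀ hC0, mul_comm]
      have : |C * h y| ≤ u := le_of_lt (abs_lt.mpr ⟨by linarith, h1⟩)
      rwa [abs_mul, abs_of_pos hC0] at this
    have hνh : |ν h| ≤ u := by
      have := hCb h (u / C) hhub (div_nonneg hu0.le hC0.le) hhb
      rwa [mul_div_cancel₀ u (ne_of_gt hC0)] at this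
    have hνheq : ν h = φ v := by
      have h1 : ν h = ∑ i, a i * ν (g i) := by
        have : h = fun y => ∑ i ∈ Finset.univ, a i * g i y := by
          funext y; exact hhy y
        rw [this, hν.sumf _ _ _ fun i _ => hg i]
      rw [h1, hφeq v]
      exact Finset.sum_congr rfl fun i _ => mul_comm _ _
    have : ν h ≤ |ν h| := le_abs_self _
    linarith [huv, hνheq ▸ this]
  -- extract an approximation
  obtain ⟨b, hbT, hbd⟩ := Metric.mem_closure_iff.mp hvcl δ hδ
  obtain ⟨n, c, y, hsum, rfl⟩ := hbT
  refine ⟨n, c, y, hsum, fun i => ?_⟩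
  have h1 : dist (v i) ((∑ j, c j • Φ (y j)) i) ≤ dist v (∑ j, c j • Φ (y j)) :=
    dist_le_pi_dist _ _ i
  have h2 : (∑ j, c j • Φ (y j)) i = ∑ j, c j * g i (y j) := by
    rw [Finset.sum_apply]
    refine Finset.sum_congr rfl fun j _ => ?_
    rw [Pi.smul_apply, smul_eq_mul]
  rw [Real.dist_eq] at h1
  rw [h2] at h1
  calc |(∑ j, c j * g i (y j)) - ν (g i)| = |v i - ∑ j, c j * g i (y j)| := by
        rw [abs_sub_comm]
    _ ≤ dist v (∑ j, c j • Φ (y j)) := h1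
    _ < δ := hbd

end helly


section groupHelpers
open Filter Topology Uniformity

variable {G : Type*} [CommGroup G] [UniformSpace G] [IsUniformGroup G]

lemma translate_uec {f : G → ℝ} (hf : IsUb f) {ε : ℝ} (hε : 0 < ε) :
    ∃ U ∈ 𝓤 G, ∀ p : G × G, p ∈ U → ∀ z : G, |f (z * p.1) - f (z * p.2)| < ε := by
  have hV : {q : ℝ × ℝ | |q.1 - q.2| < ε} ∈ 𝓤 ℝ := by
    have := Metric.dist_mem_uniformity (α := ℝ) hε
    simpa [Real.dist_eq] using this
  have hU₀ : {p : G × G | |f p.1 - f p.2| < ε} ∈ 𝓤 G := hf.1 hV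
  rw [uniformity_eq_comap_nhds_one G] at hU₀
  obtain ⟨W, hW, hWU⟩ := Filter.mem_comap.mp hU₀
  refine ⟨(fun p : G × G => p.2 / p.1) ⁻¹' W, ?_, ?_⟩
  · rw [uniformity_eq_comap_nhds_one G]
    exact Filter.preimage_mem_comap hW
  · intro p hp z
    have hmem : ((z * p.1, z * p.2) : G × G) ∈ (fun p : G × G => p.2 / p.1) ⁻¹' W := by
      have : (z * p.2) / (z * p.1) = p.2 / p.1 := mul_div_mul_left_eq_div _ _ _
      simpa [Set.mem_preimage, this] using hp
    exact hWU hmem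

lemma isUb_translate {f : G → ℝ} (hf : IsUb f) (x : G) : IsUb (fun y => f (x * y)) := by
  constructor
  · apply uc_of_abs
    intro ε hε
    obtain ⟨U, hU, hP⟩ := translate_uec hf hε
    exact ⟨U, hU, fun p hp => hP p hp x⟩
  · obtain ⟨C, hC⟩ := hf.2
    exact ⟨C, fun y => hC _⟩

lemma keyComm {μ ν : (G → ℝ) → ℝ} (hμ : IsMeas μ) (hμU : IsUniformMeasure μ) (hν : IsMeas ν)
    {f : G → ℝ} (hf : IsUb f) : conv μ ν f = conv ν μ f := by
  classical
  haveI : Nonempty G := ⟨1⟩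
  obtain ⟨B₀, hB₀⟩ := hf.2
  set B : ℝ := max B₀ 0 with hBdef
  have hB0 : 0 ≤ B := le_max_right _ _
  have hBf : ∀ z, |f z| ≤ B := fun z => (hB₀ z).trans (le_max_left _ _)
  obtain ⟨Cν, hCν1, hCνb⟩ := hν.bound
  obtain ⟨Cμ, hCμ1, hCμb⟩ := hμ.bound
  have hCν0 : (0:ℝ) < Cν := lt_of_lt_of_le zero_lt_one hCν1
  have hCμ0 : (0:ℝ) < Cμ := lt_of_lt_of_le zero_lt_one hCμ1
  set F : G → ℝ := fun x => ν fun y => f (x * y) with hFdef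
  set G' : G → ℝ := fun y => μ fun x => f (x * y) with hG'def
  have htransL : ∀ x : G, IsUb (fun y => f (x * y)) := isUb_translate hf
  have htransR : ∀ y : G, IsUb (fun x => f (x * y)) := by
    intro y
    have h2 : (fun x => f (x * y)) = fun x => f (y * x) := by
      funext x; rw [mul_comm]
    rw [h2]; exact isUb_translate hf y
  set M : G → G → ℝ := fun x x' => sSup (Set.range fun y => |f (x * y) - f (x' * y)|) with hMdef
  have hMbdd : ∀ x x', BddAbove (Set.range fun y => |f (x * y) - f (x' * y)|) := by
    intro x x'
    refine ⟨B + B, ?_⟩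
    rintro r ⟨y, rfl⟩
    exact (abs_sub _ _).trans (add_le_add (hBf _) (hBf _))
  have hMle : ∀ x x' y, |f (x * y) - f (x' * y)| ≤ M x x' := fun x x' y =>
    le_csSup (hMbdd x x') ⟨y, rfl⟩
  have hM0 : ∀ x x', 0 ≤ M x x' := fun x x' => (abs_nonneg _).trans (hMle x x' 1)
  have hMsmall : ∀ (x x' : G) (t : ℝ), (∀ y, |f (x * y) - f (x' * y)| ≤ t) → M x x' ≤ t := by
    intro x x' t h
    exact csSup_le (Set.range_nonempty _) (by rintro r ⟨y, rfl⟩; exact h y)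
  set H : Set (G → ℝ) := {g | (∀ x, |g x| ≤ Cν * B) ∧ ∀ x x', |g x - g x'| ≤ Cν * M x x'}
    with hHdef
  have hFH : F ∈ H := by
    constructor
    · intro x
      exact hCνb _ B (htransL x) hB0 (fun y => hBf _)
    · intro x x'
      have hsub : F x - F x' = ν (fun y => f (x * y) - f (x' * y)) :=
        (hν.subf (htransL x) (htransL x')).symm
      rw [hsub]
      exact hCνb _ (M x x') ((htransL x).sub' (htransL x')) (hM0 x x') (fun y => hMle x x' y)
  have hUEC : H.UniformEquicontinuous := by
    intro V hV
    obtain ⟨ε, hε, hd⟩ := Metric.mem_uniformity_dist.mp hV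
    have hε' : 0 < ε / (2 * Cν) := by positivity
    obtain ⟨U, hU, hP⟩ := translate_uec hf hε'
    refine Filter.eventually_of_mem hU ?_
    rintro ⟨x, x'⟩ hp g
    apply hd
    rw [Real.dist_eq]
    have hM' : M x x' ≤ ε / (2 * Cν) := by
      apply hMsmall x x'
      intro y
      have h1 := hP (x, x') hp y
      calc |f (x * y) - f (x' * y)| = |f (y * x) - f (y * x')| := by
            rw [mul_comm x y, mul_comm x' y]
        _ ≤ ε / (2 * Cν) := le_of_lt h1
    calc |(g : G → ℝ) x - (g : G → ℝ) x'| ≤ Cν * M x x' := g.2.2 x x'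
      _ ≤ Cν * (ε / (2 * Cν)) := mul_le_mul_of_nonneg_left hM' hCν0.le
      _ = ε / 2 := by field_simp
      _ < ε := by linarith
  have hG'ub : IsUb G' := by
    constructor
    · apply uc_of_abs
      intro ε₁ hε₁
      have hε₁' : 0 < ε₁ / (2 * Cμ) := by positivity
      obtain ⟨U, hU, hP⟩ := translate_uec hf hε₁'
      refine ⟨U, hU, ?_⟩
      intro p hp
      have hsub : G' p.1 - G' p.2 = μ (fun x => f (x * p.1) - f (x * p.2)) :=
        (hμ.subf (htransR p.1) (htransR p.2)).symm
      rw [hsub]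
      have hb : ∀ x, |f (x * p.1) - f (x * p.2)| ≤ ε₁ / (2 * Cμ) := by
        intro x
        have := hP p hp x
        calc |f (x * p.1) - f (x * p.2)| = |f (p.1 * x) - f (p.2 * x)| := by
              rw [mul_comm x p.1, mul_comm x p.2]
        _ = |f (x * p.1) - f (x * p.2)| := by rw [mul_comm p.1 x, mul_comm p.2 x]
        _ ≤ ε₁ / (2 * Cμ) := by
              have h3 := hP p hp x
              exact le_of_lt h3
      have hle := hCμb _ (ε₁ / (2 * Cμ)) ((htransR p.1).sub' (htransR p.2)) hε₁'.le hb
      have heq : Cμ * (ε₁ / (2 * Cμ)) = ε₁ / 2 := by field_simp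
      rw [heq] at hle
      linarith [hle]
    · exact ⟨Cμ * B, fun y => hCμb _ B (htransR y) hB0 (fun x => hBf _)⟩
  have key : ∀ ε : ℝ, 0 < ε → |μ F - ν G'| < ε := by
    intro ε hε
    obtain ⟨K, δ, hδ, hKδ⟩ := hμU H ⟨Cν * B, fun g hg x => hg.1 x⟩ hUEC F hFH (ε/2)
      (by linarith)
    set gg : Option {x : G // x ∈ K} → G → ℝ :=
      fun i => Option.elim i G' (fun x => fun y => f (x.1 * y)) with hgg
    have hggub : ∀ i, IsUb (gg i) := by
      intro i
      cases i with
      | none => exact hG'ub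
      | some x => exact htransL x.1
    obtain ⟨n, c, y, hsum, happ⟩ := helly_approx hν gg hggub hCν1 hCνb
      (δ := min δ (ε/2)) (lt_min hδ (by linarith))
    set gm : G → ℝ := fun x => ∑ j, c j * f (x * y j) with hgm
    have hgmH : gm ∈ H := by
      constructor
      · intro x
        calc |∑ j, c j * f (x * y j)| ≤ ∑ j, |c j * f (x * y j)| :=
              Finset.abs_sum_le_sum_abs _ _
          _ ≤ ∑ j, |c j| * B := by
              refine Finset.sum_le_sum fun j _ => ?_
              rw [abs_mul]
              exact mul_le_mul_of_nonneg_left (hBf _) (abs_nonneg _)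
          _ = (∑ j, |c j|) * B := by rw [Finset.sum_mul]
          _ ≤ Cν * B := mul_le_mul_of_nonneg_right hsum hB0
      · intro x x'
        have h1 : gm x - gm x' = ∑ j, c j * (f (x * y j) - f (x' * y j)) := by
          rw [hgm, ← Finset.sum_sub_distrib]
          exact Finset.sum_congr rfl fun j _ => by ring
        rw [h1]
        calc |∑ j, c j * (f (x * y j) - f (x' * y j))|
            ≤ ∑ j, |c j * (f (x * y j) - f (x' * y j))| := Finset.abs_sum_le_sum_abs _ _
          _ ≤ ∑ j, |c j| * M x x' := by
              refine Finset.sum_le_sum fun j _ => ?_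
              rw [abs_mul]
              exact mul_le_mul_of_nonneg_left (hMle x x' (y j)) (abs_nonneg _)
          _ = (∑ j, |c j|) * M x x' := by rw [Finset.sum_mul]
          _ ≤ Cν * M x x' := mul_le_mul_of_nonneg_right hsum (hM0 x x')
    have hclose : ∀ x ∈ K, |gm x - F x| < δ := by
      intro x hx
      have h1 := happ (some ⟨x, hx⟩)
      exact lt_of_lt_of_le h1 (min_le_left _ _)
    have h2 : |μ gm - μ F| < ε / 2 := hKδ gm hgmH hclose
    have h3 : μ gm = ∑ j, c j * G' (y j) := by
      have hs := hμ.sumf Finset.univ c (fun j => fun x => f (x * y j))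
        (fun j _ => htransR (y j))
      rw [hgm, hs]
    have h4 : |(∑ j, c j * G' (y j)) - ν G'| < ε / 2 := by
      have h1 := happ none
      exact lt_of_lt_of_le h1 (min_le_right _ _)
    have heq : μ F - ν G' = -(μ gm - μ F) + ((∑ j, c j * G' (y j)) - ν G') := by
      rw [← h3]; ring
    calc |μ F - ν G'| = |(-(μ gm - μ F)) + ((∑ j, c j * G' (y j)) - ν G')| := by rw [heq]
      _ ≤ |(-(μ gm - μ F))| + |(∑ j, c j * G' (y j)) - ν G'| := abs_add_le _ _
      _ = |μ gm - μ F| + |(∑ j, c j * G' (y j)) - ν G'| := by rw [abs_neg]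
      _ < ε := by linarith
  have hfinal : μ F = ν G' := by
    by_contra hne
    have h0 : 0 < |μ F - ν G'| := abs_pos.mpr (sub_ne_zero.mpr hne)
    exact absurd (key _ h0) (lt_irrefl _)
  have hG'2 : (fun x => μ fun y => f (x * y)) = G' := by
    funext z
    rw [hG'def]
    congr 1
    funext w
    rw [mul_comm]
  show μ (fun x => ν fun y => f (x * y)) = ν (fun x => μ fun y => f (x * y))
  rw [hG'2]
  exact hfinal

end groupHelpers

theorem stmt15 {G : Type*} [CommGroup G] [TopologicalSpace G] [IsTopologicalGroup G] :
    letI : UniformSpace G := IsTopologicalGroup.rightUniformSpace G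
    ∀ μ ν : (G → ℝ) → ℝ,
      IsMeas μ → IsUniformMeasure μ → IsMeas ν → IsUniformMeasure ν →
      ∀ f : G → ℝ, IsUb f → conv μ ν f = conv ν μ f := by
  letI : UniformSpace G := IsTopologicalGroup.rightUniformSpace G
  haveI : IsUniformGroup G := isUniformGroup_of_commGroup
  intro μ ν hμ hμU hν _hνU f hf
  exact keyComm hμ hμU hν hf
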